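/- Let G be a group that is an internal semidirect product A ⋊ B, and let ρ, ρ' : G → GL_r(ℂ) be representations that agree on A, with common restriction ρ_A irreducible. Then there exists a group homomorphism λ : B → ℂ* such that for every a ∈ A and b ∈ B, ρ(a·b) = λ(b) · ρ'(a·b). -/
import Mathlib


open Matrix

/-- Two representations of `G = A ⋊ B` agreeing on `A` with irreducible common restriction
differ by a character of `B`. -/
theorem stmt1 {G : Type} [Group G] (A B : Subgroup G) (hA : A.Normal)
    (htriv : A ⊓ B = ⊥) (hgen : ∀ g : G, ∃ a ∈ A, ∃ b ∈ B, g = a * b)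
    (r : ℕ) (ρ ρ' : G →* GL (Fin r) ℂ)
    (hagree : ∀ a : A, ρ (a : G) = ρ' (a : G))
    (hirr : ∀ V : Submodule ℂ (Fin r → ℂ),
      (∀ a : A, ∀ v ∈ V, (ρ (a : G) : Matrix (Fin r) (Fin r) ℂ).mulVec v ∈ V) →
      V = ⊥ ∨ V = ⊤) :
    ∃ lam : B →* ℂˣ, ∀ (a : A) (b : B),
      (ρ ((a : G) * (b : G)) : Matrix (Fin r) (Fin r) ℂ)
        = (lam b : ℂ) • (ρ' ((a : G) * (b : G)) : Matrix (Fin r) (Fin r) ℂ) := by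
  rcases Nat.eq_zero_or_pos r with hr | hr
  · subst hr
    refine ⟨1, fun a b => ?_⟩
    ext i j
    exact i.elim0
  · have hi : Fin r := ⟨0, hr⟩
    haveI : Nontrivial (Fin r → ℂ) := by
      refine ⟨0, Pi.single hi 1, fun h => ?_⟩
      have := congrFun h hi
      simp at this
    -- key : for each b ∈ B there is a unit scalar c with ρ b = c • ρ' b
    have key : ∀ b : B, ∃ c : ℂˣ,
        (ρ (b : G) : Matrix (Fin r) (Fin r) ℂ)
          = (c : ℂ) • (ρ' (b : G) : Matrix (Fin r) (Fin r) ℂ) := by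
      intro b
      set M : GL (Fin r) ℂ := (ρ' (b : G))⁻¹ * ρ (b : G) with hM
      -- M commutes with ρ a for a ∈ A
      have hcomm : ∀ a : A, M * ρ (a : G) = ρ (a : G) * M := by
        intro a
        have hmem : ((b : G) * (a : G) * (b : G)⁻¹) ∈ A := hA.conj_mem _ a.2 _
        have h1 : ρ ((b : G) * (a : G) * (b : G)⁻¹) = ρ' ((b : G) * (a : G) * (b : G)⁻¹) :=
          hagree ⟨_, hmem⟩
        rw [_root_.map_mul, _root_.map_mul, _root_.map_mul, _root_.map_mul,
          map_inv, map_inv, ← hagree a] at h1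
        rw [hM]
        calc (ρ' (b : G))⁻¹ * ρ (b : G) * ρ (a : G)
            = (ρ' (b : G))⁻¹ * (ρ (b : G) * ρ (a : G) * (ρ (b : G))⁻¹) * ρ (b : G) := by
              group
          _ = (ρ' (b : G))⁻¹ * (ρ' (b : G) * ρ (a : G) * (ρ' (b : G))⁻¹) * ρ (b : G) := by
              rw [h1]
          _ = ρ (a : G) * ((ρ' (b : G))⁻¹ * ρ (b : G)) := by group
      -- eigenvalue of M
      obtain ⟨c, hc⟩ := Module.End.exists_eigenvalue
        (((M : Matrix (Fin r) (Fin r) ℂ).mulVecLin : Module.End ℂ (Fin r → ℂ)))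
      set E := Module.End.eigenspace
        (((M : Matrix (Fin r) (Fin r) ℂ).mulVecLin : Module.End ℂ (Fin r → ℂ))) c with hE
      have hEinv : ∀ a : A, ∀ v ∈ E, (ρ (a : G) : Matrix (Fin r) (Fin r) ℂ).mulVec v ∈ E := by
        intro a v hv
        rw [hE, Module.End.mem_eigenspace_iff] at hv ⊢
        rw [Matrix.mulVecLin_apply] at hv ⊢
        have hcm : (M : Matrix (Fin r) (Fin r) ℂ) * (ρ (a : G) : Matrix (Fin r) (Fin r) ℂ)
            = (ρ (a : G) : Matrix (Fin r) (Fin r) ℂ) * (M : Matrix (Fin r) (Fin r) ℂ) := by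
          have := congrArg (Units.val) (hcomm a)
          simpa using this
        rw [Matrix.mulVec_mulVec, hcm, ← Matrix.mulVec_mulVec, hv, Matrix.mulVec_smul]
      have hEtop : E = ⊤ := by
        rcases hirr E hEinv with h | h
        · exact absurd h hc
        · exact h
      -- M = c • 1
      have hMscalar : (M : Matrix (Fin r) (Fin r) ℂ) = c • (1 : Matrix (Fin r) (Fin r) ℂ) := by
        ext i j
        have hv : Pi.single j 1 ∈ E := hEtop ▸ Submodule.mem_top
        rw [hE, Module.End.mem_eigenspace_iff, Matrix.mulVecLin_apply,
          Matrix.mulVec_single] at hv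
        have := congrFun hv i
        simpa [Matrix.one_apply, Pi.single_apply, mul_comm] using this
      -- c ≠ 0
      have hc0 : c ≠ 0 := by
        intro h
        subst h
        have hM0 : (M : Matrix (Fin r) (Fin r) ℂ) = 0 := by simpa using hMscalar
        have h1 : (1 : Matrix (Fin r) (Fin r) ℂ)
            = ((M⁻¹ : GL (Fin r) ℂ) : Matrix (Fin r) (Fin r) ℂ)
              * (M : Matrix (Fin r) (Fin r) ℂ) := by
          rw [← Units.val_mul, inv_mul_cancel, Units.val_one]
        rw [hM0, mul_zero] at h1
        have := congrFun (congrFun h1 hi) hi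
        simp [Matrix.one_apply] at this
      refine ⟨Units.mk0 c hc0, ?_⟩
      have hρ : ρ (b : G) = ρ' (b : G) * M := by rw [hM]; group
      have hmat := congrArg Units.val hρ
      rw [Units.val_mul, hMscalar] at hmat
      rw [hmat]
      simp [Matrix.mul_smul, Units.val_mk0]
    choose lam hlam using key
    -- scalar cancellation helper
    have hcancel : ∀ (g : G) (c c' : ℂ),
        c • (ρ' g : Matrix (Fin r) (Fin r) ℂ) = c' • (ρ' g : Matrix (Fin r) (Fin r) ℂ)
        → c = c' := by
      intro g c c' h
      have h2 := congrArg (fun X => X * ((ρ' g)⁻¹ : GL (Fin r) ℂ).1) h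
      simp only [Matrix.smul_mul] at h2
      rw [← Units.val_mul, mul_inv_cancel] at h2
      have := congrFun (congrFun h2 hi) hi
      simpa [Matrix.one_apply] using this
    refine ⟨{ toFun := lam,
              map_one' := ?_,
              map_mul' := ?_ }, ?_⟩
    · have h := hlam 1
      simp only [OneMemClass.coe_one, _root_.map_one] at h
      have h1 : (lam 1 : ℂ) • (1 : Matrix (Fin r) (Fin r) ℂ)
          = (1 : ℂ) • (1 : Matrix (Fin r) (Fin r) ℂ) := by
        simpa using h.symm
      have h2 := congrFun (congrFun h1 hi) hi
      simp only [Matrix.smul_apply, Matrix.one_apply_eq, smul_eq_mul, mul_one] at h2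
      exact Units.ext h2
    · intro b₁ b₂
      have hm : ((b₁ * b₂ : B) : G) = (b₁ : G) * (b₂ : G) := rfl
      have e : ((lam b₁ : ℂ) * (lam b₂ : ℂ))
            • (ρ' ((b₁ : G) * (b₂ : G)) : Matrix (Fin r) (Fin r) ℂ)
          = (lam (b₁ * b₂) : ℂ)
            • (ρ' ((b₁ : G) * (b₂ : G)) : Matrix (Fin r) (Fin r) ℂ) := by
        have h12 := hlam (b₁ * b₂)
        rw [hm] at h12
        rw [← h12, _root_.map_mul ρ, _root_.map_mul ρ', Units.val_mul, Units.val_mul,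
          hlam b₁, hlam b₂, Matrix.smul_mul, Matrix.mul_smul, smul_smul]
      exact Units.ext (hcancel _ _ _ e).symm
    · intro a b
      simp only [MonoidHom.coe_mk, OneHom.coe_mk]
      have h := hlam b
      rw [_root_.map_mul, _root_.map_mul, Units.val_mul, Units.val_mul, hagree a, h,
        Matrix.mul_smul]
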